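/- Let g be a regular unitary automorphism of a hermitian space (V, h) over (E, σ) whose characteristic polynomial (equal to its minimal polynomial) is P^a with P monic irreducible satisfying P = P*. Then: (i) for every 0 ≤ m ≤ a, (ker P(g)^m)^⊥ = ker P(g)^{a−m}; (ii) ker P(g)^m is totally isotropic if and only if 2m ≤ a; (iii) if a is even, ker P(g)^{a/2} is the unique g-invariant maximal totally isotropic subspace of V; (iv) if a is odd, then W = ker P(g)^{(a−1)/2} is the unique g-invariant totally isotropic subspace of V such that the characteristic polynomial of the map induced by g on W^⊥/W is irreducible, and that characteristic polynomial equals P. -/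

import Mathlib

open scoped Classical

/-- `P*`: for monic `P` with nonzero constant term `b_d`, `P*(T) = σ(b_d)⁻¹ T^d P^σ(T⁻¹)`. -/
noncomputable def pstar {k : Type*} [Field k] (σ : k →+* k) (P : Polynomial k) : Polynomial k :=
  Polynomial.C (σ (P.coeff 0))⁻¹ * (P.map σ).reverse

/-- The perpendicular `W^⊥ = {x : h(x, W) = 0}` of a subspace w.r.t. a sesquilinear form. -/
def perp {k V : Type*} [Field k] [AddCommGroup V] [Module k V] {σ : k →+* k}
    (B : V →ₗ[k] V →ₛₗ[σ] k) (W : Submodule k V) : Submodule k V where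
  carrier := {x | ∀ w ∈ W, B x w = 0}
  add_mem' := by
    intro x y hx hy w hw
    simp [map_add, hx w hw, hy w hw]
  zero_mem' := by
    intro w hw
    simp
  smul_mem' := by
    intro c x hx w hw
    simp [map_smul, hx w hw]

/-- The endomorphism induced on the subquotient `P/W` by an endomorphism `f` leaving
`P` and `W` invariant (junk value `0` otherwise). -/
noncomputable def inducedMap {k V : Type*} [Field k] [AddCommGroup V] [Module k V]
    (f : V →ₗ[k] V) (W P : Submodule k V) :
    (↥P ⧸ (Submodule.comap P.subtype W)) →ₗ[k] (↥P ⧸ (Submodule.comap P.subtype W)) :=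
  if hf : (∀ x ∈ P, f x ∈ P) ∧ (∀ x ∈ W, f x ∈ W) then
    Submodule.mapQ _ _ (f.restrict hf.1) (by
      intro x hx
      simp only [Submodule.mem_comap, LinearMap.restrict_apply, Submodule.subtype_apply] at hx ⊢
      exact hf.2 _ hx)
  else 0


open Polynomial LinearMap Module

section AllHelpers


section H
variable {E : Type*} [Field E]

lemma monic_dvd_eq {p q : E[X]} (hp : p.Monic) (hq : q.Monic) (hdvd : p ∣ q)
    (hdeg : q.natDegree ≤ p.natDegree) : p = q := by
  obtain ⟨c, rfl⟩ := hdvd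
  have hc : c ≠ 0 := by rintro rfl; rw [mul_zero] at hq; exact (hq.ne_zero rfl).elim
  have hnd := Polynomial.natDegree_mul hp.ne_zero hc
  have hc0 : c.natDegree = 0 := by omega
  obtain ⟨x, rfl⟩ := Polynomial.natDegree_eq_zero.mp hc0
  have hl := hq.leadingCoeff
  rw [Polynomial.leadingCoeff_mul, hp.leadingCoeff, one_mul, Polynomial.leadingCoeff_C] at hl
  rw [hl, Polynomial.C_1, mul_one]

lemma aeval_conj {U V : Type*} [AddCommGroup U] [Module E U] [AddCommGroup V] [Module E V]
    (A : Module.End E V) (Bn : Module.End E U) (φ : U →ₗ[E] V)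
    (h : ∀ x, A (φ x) = φ (Bn x)) (Q : E[X]) (x : U) :
    (Polynomial.aeval A Q) (φ x) = φ ((Polynomial.aeval Bn Q) x) := by
  have hpow : ∀ (i : ℕ) (x : U), (A ^ i) (φ x) = φ ((Bn ^ i) x) := by
    intro i
    induction i with
    | zero => intro x; simp
    | succ n ih =>
      intro x
      rw [pow_succ, pow_succ, Module.End.mul_apply, Module.End.mul_apply, h x, ih]
  rw [Polynomial.aeval_eq_sum_range (p := Q) A, Polynomial.aeval_eq_sum_range (p := Q) Bn]
  simp only [LinearMap.coe_sum, Finset.sum_apply, LinearMap.smul_apply, map_sum, map_smul]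
  exact Finset.sum_congr rfl fun i _ => by rw [hpow]

end H


section H2
variable {E : Type*} [Field E]

lemma matrix_charpoly_dvd_pow {n : Type*} [Fintype n] [DecidableEq n] (M : Matrix n n E)
    (m : E[X]) (hm : Polynomial.aeval M m = 0) :
    M.charpoly ∣ m ^ (Fintype.card n) := by
  classical
  let θ : Matrix n n E →+* Matrix n n E[X] := (Polynomial.C (R := E)).mapMatrix
  let M' : Matrix n n E[X] := θ M
  have hcomm : ∀ r : E[X], Commute ((Matrix.scalar n) r) M' :=
    fun r => Matrix.scalar_commute r (fun r' => Commute.all r r') M'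
  let ev : E[X][X] →+* Matrix n n E[X] :=
    Polynomial.eval₂RingHom' (Matrix.scalar n) M' hcomm
  have hdvd : (X - Polynomial.C (X : E[X])) ∣
      (m.map (Polynomial.C : E →+* E[X]) - Polynomial.C m) := by
    have := Polynomial.X_sub_C_dvd_sub_C_eval (a := (X : E[X])) (p := m.map Polynomial.C)
    rwa [Polynomial.eval_map, Polynomial.eval₂_C_X] at this
  obtain ⟨c, hc⟩ := hdvd
  have hev2 : ev (m.map (Polynomial.C : E →+* E[X])) = 0 := by
    have h1 : ev (m.map (Polynomial.C : E →+* E[X]))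
        = Polynomial.eval₂ ((Matrix.scalar n).comp (Polynomial.C : E →+* E[X])) M' m := by
      simp only [ev, Polynomial.eval₂RingHom'_apply]
      exact Polynomial.eval₂_map _ _ _
    have h2 : θ (Polynomial.aeval M m)
        = Polynomial.eval₂ (θ.comp (algebraMap E (Matrix n n E))) (θ M) m := by
      rw [Polynomial.aeval_def, Polynomial.hom_eval₂]
    have h3 : (Matrix.scalar n).comp (Polynomial.C : E →+* E[X])
        = θ.comp (algebraMap E (Matrix n n E)) := by
      ext e : 1
      ext i j
      simp [θ, Matrix.scalar_apply, Matrix.algebraMap_matrix_apply, Matrix.diagonal,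
        Matrix.of_apply, apply_ite]
    rw [h1, h3, ← h2, hm, map_zero]
  have hc2 := congrArg ev hc
  rw [map_sub, hev2, zero_sub, map_mul, map_sub] at hc2
  have hevX : ev (X : E[X][X]) = M' := by simp [ev]
  have hevCX : ev (Polynomial.C (X : E[X])) = Matrix.scalar n X := by simp [ev]
  have hevCm : ev (Polynomial.C m) = Matrix.scalar n m := by simp [ev]
  rw [hevX, hevCX, hevCm] at hc2
  -- -(scalar m) = (M' - scalar X) * ev c
  have hneg : Matrix.scalar n m = (Matrix.charmatrix M) * (ev c) := by
    have : M' - Matrix.scalar n X = -(Matrix.charmatrix M) := by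
      show M' - Matrix.scalar n X = -(Matrix.scalar n X - θ M)
      rw [neg_sub]
    rw [this, neg_mul] at hc2
    have := congrArg Neg.neg hc2
    rw [neg_neg, neg_neg] at this
    exact this
  have hdet := congrArg Matrix.det hneg
  rw [Matrix.det_mul] at hdet
  have hsc : (Matrix.scalar n m).det = m ^ (Fintype.card n) := by
    rw [Matrix.scalar_apply, Matrix.det_diagonal, Finset.prod_const, Finset.card_univ]
  rw [hsc] at hdet
  exact ⟨(ev c).det, hdet⟩

end H2


section H3
variable {E : Type*} [Field E] {U : Type*} [AddCommGroup U] [Module E U] [FiniteDimensional E U]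

lemma end_charpoly_dvd_pow (t : Module.End E U) (m : E[X]) (hm : Polynomial.aeval t m = 0) :
    LinearMap.charpoly t ∣ m ^ (Module.finrank E U) := by
  classical
  let b := Module.finBasis E U
  let M := (LinearMap.toMatrixAlgEquiv b) t
  have h1 : M.charpoly = LinearMap.charpoly t := LinearMap.charpoly_toMatrix t b
  have h2 : Polynomial.aeval M m = 0 := by
    show Polynomial.aeval ((LinearMap.toMatrixAlgEquiv b).toAlgHom t) m = 0
    rw [Polynomial.aeval_algHom_apply, hm, map_zero]
  have := matrix_charpoly_dvd_pow M m h2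
  rwa [h1, Fintype.card_fin] at this

lemma end_charpoly_eq_pow (t : Module.End E U) (P : E[X]) (hPm : P.Monic)
    (hPirr : Irreducible P) (s : ℕ) (hs : Polynomial.aeval t (P ^ s) = 0) :
    ∃ i, LinearMap.charpoly t = P ^ i ∧ Module.finrank E U = i * P.natDegree := by
  have hdvd : LinearMap.charpoly t ∣ P ^ (s * Module.finrank E U) := by
    have := end_charpoly_dvd_pow t (P ^ s) hs
    rwa [← pow_mul] at this
  have hprime : Prime P := hPirr.prime
  obtain ⟨i, _, hassoc⟩ := (dvd_prime_pow hprime _).mp hdvd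
  have heq : LinearMap.charpoly t = P ^ i :=
    Polynomial.eq_of_monic_of_associated (LinearMap.charpoly_monic t) (hPm.pow i) hassoc
  refine ⟨i, heq, ?_⟩
  have := LinearMap.charpoly_natDegree t
  rw [heq, Polynomial.natDegree_pow] at this
  omega

end H3


section H4
variable {E : Type*} [Field E] {V : Type*} [AddCommGroup V] [Module E V] [FiniteDimensional E V]
  {σ : E →+* E}

lemma mem_perp (B : V →ₗ[E] V →ₛₗ[σ] E) (W : Submodule E V) (x : V) :
    x ∈ perp B W ↔ ∀ w ∈ W, B x w = 0 := Iff.rfl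

lemma perp_finrank (hσ : ∀ x, σ (σ x) = x) (B : V →ₗ[E] V →ₛₗ[σ] E)
    (h_herm : ∀ x y : V, B y x = σ (B x y))
    (h_nondeg : ∀ x : V, (∀ y : V, B x y = 0) → x = 0) (W : Submodule E V) :
    Module.finrank E (perp B W) + Module.finrank E W = Module.finrank E V := by
  classical
  have hσinj : Function.Injective σ := fun x y h => by
    have := congrArg σ h; rwa [hσ, hσ] at this
  have nondeg2 : ∀ v : V, (∀ x : V, B x v = 0) → v = 0 := by
    intro v hv
    refine h_nondeg v fun y => ?_
    rw [h_herm, hv y, map_zero]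
  set k := Module.finrank E W with hk
  let b : Basis (Fin k) E W := Module.finBasis E W
  let c : Fin k → (V →ₗ[E] E) := fun i =>
    { toFun := fun x => B x (b i : V)
      map_add' := by intro x y; show (B (x + y)) (b i : V) = _; rw [map_add]; rfl
      map_smul' := by intro r x; show (B (r • x)) (b i : V) = _; rw [map_smul]; rfl }
  let Φ : V →ₗ[E] (Fin k → E) := LinearMap.pi c
  have hker : LinearMap.ker Φ = perp B W := by
    ext x
    simp only [LinearMap.mem_ker, mem_perp, Φ]
    constructor
    · intro hx w hw
      have hfun : ∀ i, B x (b i : V) = 0 := by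
        intro i
        have := congrFun hx i
        simpa [c] using this
      have : (⟨w, hw⟩ : W) ∈ (⊤ : Submodule E W) := trivial
      rw [← b.span_eq] at this
      have key : ∀ u ∈ Submodule.span E (Set.range b), B x (u : W) = 0 := by
        intro u hu
        induction hu using Submodule.span_induction with
        | mem u hu => obtain ⟨i, rfl⟩ := hu; exact hfun i
        | zero => simp
        | add u v _ _ hu hv => rw [Submodule.coe_add, map_add, hu, hv, add_zero]
        | smul r u _ hu =>
          rw [Submodule.coe_smul, LinearMap.map_smulₛₗ, hu, smul_zero]
      exact key ⟨w, hw⟩ this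
    · intro hx
      funext i
      simpa [c] using hx (b i : V) (b i).2
  have hrange : LinearMap.range Φ = ⊤ := by
    by_contra hne
    obtain ⟨ψ, hψne, hψ⟩ := Submodule.exists_dual_map_eq_bot_of_lt_top
      (lt_top_iff_ne_top.2 hne) inferInstance
    set cv : Fin k → E := fun i => ψ (Pi.single i 1) with hcv
    have hψeval : ∀ p : Fin k → E, ψ p = ∑ i, p i * cv i := by
      intro p
      have hp : ∑ i, Pi.single i (p i) = p := Finset.univ_sum_single p
      have hsingle : ∀ i, Pi.single i (p i) = (p i) • (Pi.single i (1 : E) : Fin k → E) := by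
        intro i
        rw [← Pi.single_smul, smul_eq_mul, mul_one]
      calc ψ p = ψ (∑ i, Pi.single i (p i)) := by rw [hp]
        _ = ∑ i, p i * cv i := by
            rw [map_sum]
            refine Finset.sum_congr rfl fun i _ => ?_
            rw [hsingle i, map_smul, smul_eq_mul]
    have hzero : ∀ x : V, ψ (Φ x) = 0 := by
      intro x
      have : Φ x ∈ LinearMap.range Φ := ⟨x, rfl⟩
      have h2 : ψ (Φ x) ∈ (LinearMap.range Φ).map ψ := ⟨Φ x, this, rfl⟩
      rw [hψ] at h2
      exact (Submodule.mem_bot E).mp h2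
    set v : V := ∑ i, σ (cv i) • (b i : V) with hv
    have hvzero : v = 0 := by
      apply nondeg2
      intro x
      have : B x v = ∑ i, cv i * B x (b i : V) := by
        rw [hv, map_sum]
        refine Finset.sum_congr rfl fun i _ => ?_
        rw [LinearMap.map_smulₛₗ, hσ, smul_eq_mul]
      rw [this]
      have := hzero x
      rw [hψeval] at this
      rw [← this]
      exact Finset.sum_congr rfl fun i _ => by simp [Φ, c, mul_comm]
    have hvW : (∑ i, σ (cv i) • b i : W) = 0 := by
      apply Subtype.ext
      have hcoe : ((∑ i, σ (cv i) • b i : W) : V) = v := by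
        rw [hv]
        push_cast
        rfl
      rw [hcoe, hvzero]
      rfl
    have hcoef : ∀ i, σ (cv i) = 0 := by
      have hli := b.linearIndependent
      rw [Fintype.linearIndependent_iff] at hli
      exact hli _ hvW
    have hcv0 : ∀ i, cv i = 0 := fun i => by
      have := congrArg σ (hcoef i); rwa [hσ, map_zero] at this
    apply hψne
    apply LinearMap.ext
    intro p
    rw [hψeval p]
    simp [hcv0]
  have hrn := LinearMap.finrank_range_add_finrank_ker Φ
  rw [hrange, hker] at hrn
  have htop : Module.finrank E (⊤ : Submodule E (Fin k → E)) = k := by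
    rw [finrank_top, Module.finrank_fin_fun]
  omega

end H4

end AllHelpers

section QuotH
variable {E : Type*} [Field E] {V : Type*} [AddCommGroup V] [Module E V] [FiniteDimensional E V]

lemma quot_finrank (W Pp : Submodule E V) (hWP : W ≤ Pp) :
    Module.finrank E (↥Pp ⧸ (Submodule.comap Pp.subtype W)) + Module.finrank E W
      = Module.finrank E Pp := by
  have e : (Submodule.comap Pp.subtype W) ≃ₗ[E] W := Submodule.comapSubtypeEquivOfLe hWP
  rw [← e.finrank_eq]
  exact Submodule.finrank_quotient_add_finrank _

end QuotH




section InducedH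
variable {E : Type*} [Field E]

lemma aeval_inducedMap_eq_zero {V : Type*} [AddCommGroup V] [Module E V]
    (f : V →ₗ[E] V) (W Pp : Submodule E V)
    (h1 : ∀ x ∈ Pp, f x ∈ Pp) (h2 : ∀ x ∈ W, f x ∈ W) (Q : Polynomial E)
    (hQ : ∀ x ∈ Pp, (Polynomial.aeval f Q) x ∈ W) :
    Polynomial.aeval (inducedMap f W Pp) Q = 0 := by
  have hcond : (∀ x ∈ Pp, f x ∈ Pp) ∧ (∀ x ∈ W, f x ∈ W) := ⟨h1, h2⟩
  have hind : ∀ x : Pp, (inducedMap f W Pp) ((Submodule.comap Pp.subtype W).mkQ x)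
      = (Submodule.comap Pp.subtype W).mkQ ((f.restrict hcond.1) x) := by
    intro x
    unfold inducedMap
    rw [dif_pos hcond]
    simp only [Submodule.mkQ_apply, Submodule.mapQ_apply]
  have hcoe : ∀ (x : Pp), ((Polynomial.aeval (f.restrict hcond.1) Q) x : V)
      = (Polynomial.aeval f Q) (x : V) :=
    fun x => (aeval_conj f (f.restrict hcond.1) Pp.subtype (fun _ => rfl) Q x).symm
  apply LinearMap.ext
  intro z
  obtain ⟨x, rfl⟩ := (Submodule.comap Pp.subtype W).mkQ_surjective z
  rw [aeval_conj (inducedMap f W Pp) (f.restrict hcond.1)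
    (Submodule.comap Pp.subtype W).mkQ hind Q x]
  rw [LinearMap.zero_apply, Submodule.mkQ_apply, Submodule.Quotient.mk_eq_zero]
  rw [Submodule.mem_comap, Submodule.subtype_apply, hcoe x]
  exact hQ _ x.2

lemma charpoly_of_aeval_irr {U : Type*} [AddCommGroup U] [Module E U] [FiniteDimensional E U]
    (t : Module.End E U) (P : Polynomial E) (hPmonic : P.Monic) (hPirr : Irreducible P)
    (h0 : Polynomial.aeval t P = 0) (hfr : Module.finrank E U = P.natDegree) :
    LinearMap.charpoly t = P := by
  have hd : 0 < P.natDegree := hPirr.natDegree_pos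
  have hnontriv : Nontrivial U := Module.nontrivial_of_finrank_pos (R := E) (by omega)
  have hminT : minpoly E t = P := by
    obtain ⟨u, hu⟩ := minpoly.dvd E t h0
    rcases hPirr.isUnit_or_isUnit hu with h | h
    · exfalso
      have h10 : minpoly E t = 1 := (minpoly.monic (LinearMap.isIntegral t)).eq_one_of_isUnit h
      have h11 := minpoly.aeval E t
      rw [h10, Polynomial.aeval_one] at h11
      obtain ⟨z, w, hzw⟩ := exists_pair_ne U
      apply hzw
      have hzero : ∀ u : U, u = 0 := fun u => by
        calc u = (1 : Module.End E U) u := rfl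
          _ = (0 : Module.End E U) u := by rw [h11]
          _ = 0 := rfl
      rw [hzero z, hzero w]
    · have hassoc : Associated (minpoly E t) P := ⟨h.unit, by rw [IsUnit.unit_spec, ← hu]⟩
      exact Polynomial.eq_of_monic_of_associated
        (minpoly.monic (LinearMap.isIntegral t)) hPmonic hassoc
  symm
  apply monic_dvd_eq hPmonic (LinearMap.charpoly_monic t)
    (hminT ▸ LinearMap.minpoly_dvd_charpoly t)
  rw [LinearMap.charpoly_natDegree, hfr]

end InducedH


/-- Let `g` be a regular unitary automorphism of a hermitian space `(V, h)` over
`(E, σ)` with characteristic polynomial = minimal polynomial = `P^a`, `P` monic irreducible and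
`P = P*`. Then: (i) `(ker P(g)^m)^⊥ = ker P(g)^{a−m}` for `0 ≤ m ≤ a`; (ii) `ker P(g)^m` is
totally isotropic iff `2m ≤ a`; (iii) if `a` is even, `ker P(g)^{a/2}` is the unique
`g`-invariant maximal totally isotropic subspace; (iv) if `a` is odd, `W = ker P(g)^{(a−1)/2}`
is the unique `g`-invariant totally isotropic subspace such that the characteristic polynomial
of `g` on `W^⊥/W` is irreducible, and that characteristic polynomial equals `P`. -/
theorem stmt16 {E : Type*} [Field E] (σ : E →+* E) (hσ : ∀ x, σ (σ x) = x)
    {V : Type*} [AddCommGroup V] [Module E V] [FiniteDimensional E V]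
    (B : V →ₗ[E] V →ₛₗ[σ] E)
    (h_herm : ∀ x y : V, B y x = σ (B x y))
    (h_nondeg : ∀ x : V, (∀ y : V, B x y = 0) → x = 0)
    (g : V ≃ₗ[E] V) (hg : ∀ x y : V, B (g x) (g y) = B x y)
    (P : Polynomial E) (a : ℕ) (hPmonic : P.Monic) (hPirr : Irreducible P)
    (hPstar : P = pstar σ P) (ha : 1 ≤ a)
    (hreg : LinearMap.charpoly g.toLinearMap = minpoly E g.toLinearMap)
    (hchar : LinearMap.charpoly g.toLinearMap = P ^ a) :
    (∀ m ≤ a, perp B (LinearMap.ker ((Polynomial.aeval g.toLinearMap P) ^ m))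
        = LinearMap.ker ((Polynomial.aeval g.toLinearMap P) ^ (a - m))) ∧
    (∀ m ≤ a, (LinearMap.ker ((Polynomial.aeval g.toLinearMap P) ^ m)
          ≤ perp B (LinearMap.ker ((Polynomial.aeval g.toLinearMap P) ^ m)) ↔ 2 * m ≤ a)) ∧
    (Even a →
      (Submodule.map g.toLinearMap (LinearMap.ker ((Polynomial.aeval g.toLinearMap P) ^ (a / 2)))
          ≤ LinearMap.ker ((Polynomial.aeval g.toLinearMap P) ^ (a / 2)) ∧
       LinearMap.ker ((Polynomial.aeval g.toLinearMap P) ^ (a / 2))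
          ≤ perp B (LinearMap.ker ((Polynomial.aeval g.toLinearMap P) ^ (a / 2))) ∧
       (∀ W' : Submodule E V,
          LinearMap.ker ((Polynomial.aeval g.toLinearMap P) ^ (a / 2)) ≤ W' →
          W' ≤ perp B W' →
          W' = LinearMap.ker ((Polynomial.aeval g.toLinearMap P) ^ (a / 2))) ∧
       (∀ W : Submodule E V, Submodule.map g.toLinearMap W ≤ W → W ≤ perp B W →
          (∀ W' : Submodule E V, W ≤ W' → W' ≤ perp B W' → W' = W) →
          W = LinearMap.ker ((Polynomial.aeval g.toLinearMap P) ^ (a / 2))))) ∧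
    (Odd a →
      (Submodule.map g.toLinearMap
          (LinearMap.ker ((Polynomial.aeval g.toLinearMap P) ^ ((a - 1) / 2)))
          ≤ LinearMap.ker ((Polynomial.aeval g.toLinearMap P) ^ ((a - 1) / 2)) ∧
       LinearMap.ker ((Polynomial.aeval g.toLinearMap P) ^ ((a - 1) / 2))
          ≤ perp B (LinearMap.ker ((Polynomial.aeval g.toLinearMap P) ^ ((a - 1) / 2))) ∧
       LinearMap.charpoly (inducedMap g.toLinearMap
          (LinearMap.ker ((Polynomial.aeval g.toLinearMap P) ^ ((a - 1) / 2)))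
          (perp B (LinearMap.ker ((Polynomial.aeval g.toLinearMap P) ^ ((a - 1) / 2))))) = P ∧
       (∀ W' : Submodule E V, Submodule.map g.toLinearMap W' ≤ W' → W' ≤ perp B W' →
          Irreducible (LinearMap.charpoly (inducedMap g.toLinearMap W' (perp B W'))) →
          W' = LinearMap.ker ((Polynomial.aeval g.toLinearMap P) ^ ((a - 1) / 2))))) := by
  classical
  set f := g.toLinearMap with hfdef
  set q : Module.End E V := Polynomial.aeval f P with hqdef
  set d := P.natDegree with hddef
  have hd : 0 < d := hPirr.natDegree_pos
  have hPne : P ≠ 0 := hPmonic.ne_zero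
  have hmin : minpoly E f = P ^ a := by rw [← hreg, hchar]
  have hqa : q ^ a = 0 := by
    rw [hqdef, ← map_pow, ← hchar]
    exact LinearMap.aeval_self_charpoly f
  have hnV : Module.finrank E V = a * d := by
    have h1 := LinearMap.charpoly_natDegree f
    rw [hchar, Polynomial.natDegree_pow, ← hddef] at h1
    omega
  -- commutation of q with f
  have hqf : q * f = f * q := by
    rw [hqdef]
    calc Polynomial.aeval f P * f = Polynomial.aeval f (P * X) := by
          rw [map_mul, Polynomial.aeval_X]
      _ = Polynomial.aeval f (X * P) := by rw [mul_comm]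
      _ = f * Polynomial.aeval f P := by rw [map_mul, Polynomial.aeval_X]
  have hKinv : ∀ m : ℕ, ∀ x ∈ LinearMap.ker (q ^ m), f x ∈ LinearMap.ker (q ^ m) := by
    intro m x hx
    rw [LinearMap.mem_ker] at hx ⊢
    have hcom : (q ^ m) * f = f * (q ^ m) := ((Commute.pow_left hqf m))
    calc (q ^ m) (f x) = ((q ^ m) * f) x := rfl
      _ = (f * (q ^ m)) x := by rw [hcom]
      _ = f ((q ^ m) x) := rfl
      _ = 0 := by rw [hx, map_zero]
  have hKmono : ∀ m m' : ℕ, m ≤ m' → LinearMap.ker (q ^ m) ≤ LinearMap.ker (q ^ m') := by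
    intro m m' h x hx
    rw [LinearMap.mem_ker] at hx ⊢
    obtain ⟨c, rfl⟩ := Nat.exists_eq_add_of_le h
    rw [add_comm, pow_add]
    show (q ^ c) ((q ^ m) x) = 0
    rw [hx, map_zero]
  -- classification of invariant subspaces
  have hsub : ∀ W : Submodule E V, (∀ x ∈ W, f x ∈ W) →
      ∃ i, i ≤ a ∧ Module.finrank E W = i * d ∧ W ≤ LinearMap.ker (q ^ i) := by
    intro W hW
    set r := f.restrict hW with hrdef
    have hconj : ∀ x : W, f (W.subtype x) = W.subtype (r x) := fun x => rfl
    have hr_nil : Polynomial.aeval r (P ^ a) = 0 := by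
      apply LinearMap.ext; intro x; apply Subtype.ext
      have h1 := aeval_conj f r W.subtype hconj (P ^ a) x
      have h2 : Polynomial.aeval f (P ^ a) = q ^ a := by rw [map_pow, hqdef]
      rw [h2, hqa] at h1
      simp only [LinearMap.zero_apply, Submodule.subtype_apply] at h1
      show ((Polynomial.aeval r (P ^ a)) x : V) = ((0 : Module.End E W) x : V)
      rw [LinearMap.zero_apply, ZeroMemClass.coe_zero]
      exact h1.symm
    obtain ⟨i, hchar_r, hrank⟩ := end_charpoly_eq_pow r P hPmonic hPirr a hr_nil
    have hia : i ≤ a := by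
      have hle : Module.finrank E W ≤ Module.finrank E V := Submodule.finrank_le W
      rw [hrank, hnV] at hle
      exact Nat.le_of_mul_le_mul_right hle hd
    refine ⟨i, hia, hrank, ?_⟩
    intro x hx
    rw [LinearMap.mem_ker]
    have hcay : Polynomial.aeval r (P ^ i) = 0 := by
      rw [← hchar_r]; exact LinearMap.aeval_self_charpoly r
    have h1 := aeval_conj f r W.subtype hconj (P ^ i) ⟨x, hx⟩
    rw [hcay] at h1
    simp only [LinearMap.zero_apply, map_zero] at h1
    have h2 : Polynomial.aeval f (P ^ i) = q ^ i := by rw [map_pow, hqdef]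
    rw [h2] at h1
    exact h1
  -- dimension of kernels
  have hKa : LinearMap.ker (q ^ a) = ⊤ := by rw [hqa]; exact LinearMap.ker_zero
  have hstrict : ∀ m, m < a →
      LinearMap.ker (q ^ m) ≠ LinearMap.ker (q ^ (m + 1)) := by
    intro m hm heq
    have h1 := Module.End.ker_pow_constant heq (a - m)
    rw [show m + (a - m) = a by omega, hKa] at h1
    have hq0 : q ^ m = 0 := LinearMap.ker_eq_top.mp h1
    have : Polynomial.aeval f (P ^ m) = 0 := by rw [map_pow, ← hqdef, hq0]
    have hdvd : P ^ a ∣ P ^ m := hmin ▸ minpoly.dvd E f this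
    have hnd := Polynomial.natDegree_le_of_dvd hdvd (pow_ne_zero m hPne)
    rw [Polynomial.natDegree_pow, Polynomial.natDegree_pow, ← hddef] at hnd
    have : a ≤ m := Nat.le_of_mul_le_mul_right hnd hd
    omega
  have hKmul : ∀ m : ℕ, ∃ i, Module.finrank E (LinearMap.ker (q ^ m)) = i * d := by
    intro m
    obtain ⟨i, _, h, _⟩ := hsub (LinearMap.ker (q ^ m)) (hKinv m)
    exact ⟨i, h⟩
  have hgap : ∀ m, m < a → Module.finrank E (LinearMap.ker (q ^ m)) + d
      ≤ Module.finrank E (LinearMap.ker (q ^ (m + 1))) := by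
    intro m hm
    obtain ⟨i, hi⟩ := hKmul m
    obtain ⟨i', hi'⟩ := hKmul (m + 1)
    have hlt : Module.finrank E (LinearMap.ker (q ^ m))
        < Module.finrank E (LinearMap.ker (q ^ (m + 1))) :=
      Submodule.finrank_lt_finrank_of_lt (lt_of_le_of_ne (hKmono m (m+1) (by omega)) (hstrict m hm))
    rw [hi, hi'] at hlt ⊢
    have : i < i' := by
      by_contra hcon
      push_neg at hcon
      exact absurd (Nat.mul_le_mul_right d hcon) (by omega)
    calc i * d + d = (i + 1) * d := by ring
      _ ≤ i' * d := Nat.mul_le_mul_right d (by omega)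
  have hKdim : ∀ m, m ≤ a → Module.finrank E (LinearMap.ker (q ^ m)) = m * d := by
    have hup : ∀ m, m ≤ a → m * d ≤ Module.finrank E (LinearMap.ker (q ^ m)) := by
      intro m
      induction m with
      | zero => intro _; omega
      | succ k ih =>
        intro hk
        have h1 := ih (by omega)
        have h2 := hgap k (by omega)
        calc (k + 1) * d = k * d + d := by ring
          _ ≤ _ := by omega
    have hdown : ∀ c m, m + c = a →
        Module.finrank E (LinearMap.ker (q ^ m)) + c * d
          ≤ Module.finrank E (LinearMap.ker (q ^ a)) := by
      intro c
      induction c with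
      | zero => intro m hm; rw [show m = a by omega]; omega
      | succ k ih =>
        intro m hm
        have h1 := hgap m (by omega)
        have h2 := ih (m + 1) (by omega)
        calc Module.finrank E (LinearMap.ker (q ^ m)) + (k+1) * d
            = (Module.finrank E (LinearMap.ker (q ^ m)) + d) + k * d := by ring
          _ ≤ Module.finrank E (LinearMap.ker (q ^ (m+1))) + k * d := by omega
          _ ≤ _ := h2
    intro m hm
    have h1 := hup m hm
    have h2 := hdown (a - m) m (by omega)
    have h3 : Module.finrank E (LinearMap.ker (q ^ a)) = a * d := by
      rw [hKa, finrank_top]; exact hnV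
    have h4 : m * d + (a - m) * d = a * d := by
      rw [← Nat.add_mul]; congr 1; omega
    omega
  -- the unitary adjoint machinery
  set f' := g.symm.toLinearMap with hf'def
  have hff' : f * f' = 1 := by
    apply LinearMap.ext; intro x
    simp [hfdef, hf'def, Module.End.mul_apply]
  have hf'f : f' * f = 1 := by
    apply LinearMap.ext; intro x
    simp [hfdef, hf'def, Module.End.mul_apply]
  have hcomm_ff' : Commute f f' := by
    show f * f' = f' * f
    rw [hff', hf'f]
  have hpow_ff' : ∀ i : ℕ, (f ^ i) * (f' ^ i) = 1 := by
    intro i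
    have := hcomm_ff'.mul_pow i
    rw [hff', one_pow] at this
    exact this.symm
  have hpow_f'f : ∀ i : ℕ, (f' ^ i) * (f ^ i) = 1 := by
    intro i
    have := hcomm_ff'.symm.mul_pow i
    rw [hf'f, one_pow] at this
    exact this.symm
  have hgB : ∀ x y : V, B (f x) y = B x (f' y) := by
    intro x y
    have h1 := hg x (g.symm y)
    have h2 : g (g.symm y) = y := g.apply_symm_apply y
    rw [h2] at h1
    exact h1
  have hpowB : ∀ (i : ℕ) (x y : V), B ((f ^ i) x) y = B x ((f' ^ i) y) := by
    intro i
    induction i with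
    | zero => intro x y; simp
    | succ k ih =>
      intro x y
      have h1 : (f ^ (k+1)) x = (f ^ k) (f x) := by rw [pow_succ]; rfl
      have h2 : (f' ^ (k+1)) y = f' ((f' ^ k) y) := by rw [pow_succ']; rfl
      rw [h1, ih (f x) y, h2]
      exact hgB x ((f' ^ k) y)
  have hC1 : ∀ (Q : E[X]) (x y : V),
      B ((Polynomial.aeval f (Q.map σ)) x) y = B x ((Polynomial.aeval f' Q) y) := by
    intro Q x y
    have hdeg : (Q.map σ).natDegree < Q.natDegree + 1 :=
      lt_of_le_of_lt Polynomial.natDegree_map_le (Nat.lt_succ_self _)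
    rw [Polynomial.aeval_eq_sum_range' hdeg, Polynomial.aeval_eq_sum_range' (Nat.lt_succ_self _)]
    simp only [LinearMap.sum_apply, map_sum, LinearMap.smul_apply, map_smul,
      LinearMap.map_smulₛₗ, Polynomial.coeff_map]
    exact Finset.sum_congr rfl fun i _ => by rw [hpowB i x y]
  have hb0 : P.coeff 0 ≠ 0 := by
    intro h
    apply hPne
    conv_lhs => rw [hPstar]
    rw [pstar, h, map_zero, inv_zero, map_zero, zero_mul]
  have hmapσσ : (P.map σ).map σ = P := by
    rw [Polynomial.map_map]
    have : σ.comp σ = RingHom.id E := RingHom.ext hσ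
    rw [this, Polynomial.map_id]
  have hPσ : P.map σ = Polynomial.C (P.coeff 0)⁻¹ * P.reverse := by
    conv_lhs => rw [hPstar]
    rw [pstar, Polynomial.map_mul, Polynomial.map_C, map_inv₀, hσ]
    congr 1
    have hinjσ : Function.Injective σ := fun x y h => by
      have := congrArg σ h; rwa [hσ, hσ] at this
    have hcompid : σ.comp σ = RingHom.id E := RingHom.ext hσ
    simp only [Polynomial.reverse]
    rw [Polynomial.natDegree_map_eq_of_injective hinjσ, Polynomial.reflect_map,
      Polynomial.map_map, hcompid, Polynomial.map_id]
  have hrevaeval : (f ^ d) * Polynomial.aeval f' P.reverse = q := by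
    have hrevdeg : P.reverse.natDegree < d + 1 :=
      lt_of_le_of_lt P.reverse_natDegree_le (Nat.lt_succ_self _)
    rw [hqdef, Polynomial.aeval_eq_sum_range' hrevdeg,
      Polynomial.aeval_eq_sum_range' (show P.natDegree < d + 1 by omega)]
    rw [Finset.mul_sum]
    have key : ∀ i ∈ Finset.range (d + 1),
        f ^ d * (P.reverse.coeff i • f' ^ i) = P.coeff (d - i) • f ^ (d - i) := by
      intro i hi
      rw [Finset.mem_range] at hi
      have hii : i ≤ d := by omega
      have hco : P.reverse.coeff i = P.coeff (d - i) := by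
        rw [Polynomial.coeff_reverse, Polynomial.revAt_le hii]
      have hpw : f ^ d * f' ^ i = f ^ (d - i) := by
        have : f ^ d = f ^ (d - i) * f ^ i := by rw [← pow_add]; congr 1; omega
        rw [this, mul_assoc, hpow_ff' i, mul_one]
      rw [hco, mul_smul_comm, hpw]
    rw [Finset.sum_congr rfl key]
    have := Finset.sum_range_reflect (fun j => P.coeff j • f ^ j) (d + 1)
    simpa using this
  have haeval_rev : Polynomial.aeval f' P.reverse = (f' ^ d) * q := by
    calc Polynomial.aeval f' P.reverse
        = ((f' ^ d) * (f ^ d)) * Polynomial.aeval f' P.reverse := by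
          rw [hpow_f'f d, one_mul]
      _ = (f' ^ d) * ((f ^ d) * Polynomial.aeval f' P.reverse) := by rw [mul_assoc]
      _ = (f' ^ d) * q := by rw [hrevaeval]
  have hstar1 : ∀ x y : V, B (q x) y = σ (P.coeff 0)⁻¹ * B x ((f' ^ d) (q y)) := by
    intro x y
    have h1 : B (q x) y = B x ((Polynomial.aeval f' (P.map σ)) y) := by
      have := hC1 (P.map σ) x y
      rw [hmapσσ, ← hqdef] at this
      exact this
    rw [h1, hPσ, map_mul, Polynomial.aeval_C]
    have h2 : ((algebraMap E (Module.End E V)) (P.coeff 0)⁻¹ *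
        (Polynomial.aeval f' P.reverse)) y
        = (P.coeff 0)⁻¹ • ((Polynomial.aeval f' P.reverse) y) := by
      rw [Module.End.mul_apply, Module.algebraMap_end_apply]
    rw [h2, (B x).map_smulₛₗ, haeval_rev]
    rw [smul_eq_mul, map_inv₀]
    rfl
  -- pointwise commutation of q with f'
  have hqf'pt : ∀ z : V, q (f' z) = f' (q z) := by
    intro z
    have hinj : Function.Injective f := g.injective
    apply hinj
    have h1 : f (q (f' z)) = q (f (f' z)) := by
      have := congrArg (fun (h : Module.End E V) => h (f' z)) hqf
      exact (this : q (f (f' z)) = f (q (f' z))).symm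
    rw [h1]
    have h2 : f (f' z) = z := by
      have := congrArg (fun (h : Module.End E V) => h z) hff'
      exact this
    have h3 : f (f' (q z)) = q z := by
      have := congrArg (fun (h : Module.End E V) => h (q z)) hff'
      exact this
    rw [h2, h3]
  have hqf'pow : ∀ (k : ℕ) (z : V), q ((f' ^ k) z) = (f' ^ k) (q z) := by
    intro k
    induction k with
    | zero => intro z; simp
    | succ j ih =>
      intro z
      have h1 : (f' ^ (j+1)) z = f' ((f' ^ j) z) := by rw [pow_succ']; rfl
      have h2 : (f' ^ (j+1)) (q z) = f' ((f' ^ j) (q z)) := by rw [pow_succ']; rfl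
      rw [h1, h2, hqf'pt ((f' ^ j) z), ih z]
  have hiter : ∀ (m : ℕ) (x y : V),
      B ((q ^ m) x) y = (σ (P.coeff 0)⁻¹) ^ m * B x ((f' ^ (d * m)) ((q ^ m) y)) := by
    intro m
    induction m with
    | zero => intro x y; simp
    | succ m ih =>
      intro x y
      have h1 : (q ^ (m+1)) x = (q ^ m) (q x) := by rw [pow_succ]; rfl
      rw [h1, ih (q x) y, hstar1 x _]
      have h2 : q ((f' ^ (d * m)) ((q ^ m) y)) = (f' ^ (d * m)) ((q ^ (m+1)) y) := by
        rw [hqf'pow (d * m) ((q ^ m) y)]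
        congr 1
        rw [pow_succ']
        rfl
      rw [h2]
      have h3 : (f' ^ d) ((f' ^ (d * m)) ((q ^ (m+1)) y))
          = (f' ^ (d * (m+1))) ((q ^ (m+1)) y) := by
        have : (f' ^ (d * (m+1))) = (f' ^ d) * (f' ^ (d * m)) := by
          rw [← pow_add]; congr 1; ring
        rw [this]; rfl
      rw [h3]
      ring
  have hvanish : ∀ (m : ℕ) (x y : V), (q ^ m) y = 0 → B ((q ^ m) x) y = 0 := by
    intro m x y hy
    rw [hiter m x y, hy, map_zero, map_zero, mul_zero]
  -- (i)
  have hrange_eq : ∀ m, m ≤ a →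
      LinearMap.range (q ^ m) = LinearMap.ker (q ^ (a - m)) := by
    intro m hm
    have hle : LinearMap.range (q ^ m) ≤ LinearMap.ker (q ^ (a - m)) := by
      rintro y ⟨x, rfl⟩
      rw [LinearMap.mem_ker]
      have : (q ^ (a - m)) ((q ^ m) x) = ((q ^ (a - m)) * (q ^ m)) x := rfl
      rw [this, ← pow_add, show a - m + m = a by omega, hqa]
      rfl
    apply Submodule.eq_of_le_of_finrank_le hle
    have h1 := LinearMap.finrank_range_add_finrank_ker (q ^ m)
    rw [hKdim m hm, hnV] at h1
    rw [hKdim (a - m) (by omega)]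
    have h4 : m * d + (a - m) * d = a * d := by rw [← Nat.add_mul]; congr 1; omega
    omega
  have hperp_eq : ∀ m, m ≤ a →
      perp B (LinearMap.ker (q ^ m)) = LinearMap.ker (q ^ (a - m)) := by
    intro m hm
    have hle : LinearMap.ker (q ^ (a - m)) ≤ perp B (LinearMap.ker (q ^ m)) := by
      rw [← hrange_eq m hm]
      rintro y ⟨x, rfl⟩
      rw [mem_perp]
      intro w hw
      exact hvanish m x w (LinearMap.mem_ker.mp hw)
    symm
    apply Submodule.eq_of_le_of_finrank_le hle
    have h1 := perp_finrank hσ B h_herm h_nondeg (LinearMap.ker (q ^ m))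
    rw [hKdim m hm, hnV] at h1
    rw [hKdim (a - m) (by omega)]
    have h4 : m * d + (a - m) * d = a * d := by rw [← Nat.add_mul]; congr 1; omega
    omega
  -- (ii)
  have hii : ∀ m, m ≤ a →
      (LinearMap.ker (q ^ m) ≤ perp B (LinearMap.ker (q ^ m)) ↔ 2 * m ≤ a) := by
    intro m hm
    rw [hperp_eq m hm]
    constructor
    · intro hle
      have h1 := Submodule.finrank_mono hle
      rw [hKdim m hm, hKdim (a - m) (by omega)] at h1
      have h2 : m ≤ a - m := Nat.le_of_mul_le_mul_right h1 hd
      omega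
    · intro h2
      exact hKmono m (a - m) (by omega)
  refine ⟨hperp_eq, hii, ?_, ?_⟩
  · -- (iii)
    intro haeven
    have hc2 : 2 * (a / 2) = a := by
      obtain ⟨c, hc⟩ := haeven; omega
    refine ⟨?_, ?_, ?_, ?_⟩
    · exact Submodule.map_le_iff_le_comap.mpr fun x hx => hKinv _ x hx
    · exact (hii (a / 2) (by omega)).mpr (by omega)
    · intro W' hle hiso
      symm
      apply Submodule.eq_of_le_of_finrank_le hle
      have h1 := perp_finrank hσ B h_herm h_nondeg W'
      have h2 := Submodule.finrank_mono hiso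
      rw [hKdim (a / 2) (by omega)]
      rw [hnV] at h1
      have h3 : a * d = 2 * ((a / 2) * d) := by
        conv_lhs => rw [← hc2]
        ring
      omega
    · intro W hWmap hWiso hWmax
      obtain ⟨j, hja, hrankW, hWle⟩ := hsub W (fun x hx => hWmap ⟨x, hx, rfl⟩)
      have hWeq : W = LinearMap.ker (q ^ j) :=
        Submodule.eq_of_le_of_finrank_le hWle (by rw [hKdim j hja, hrankW])
      have h2j : 2 * j ≤ a := (hii j hja).mp (hWeq ▸ hWiso)
      have hjm : j ≤ a / 2 := by omega
      have hWle2 : W ≤ LinearMap.ker (q ^ (a / 2)) := by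
        rw [hWeq]; exact hKmono j (a / 2) hjm
      have := hWmax (LinearMap.ker (q ^ (a / 2))) hWle2
        ((hii (a / 2) (by omega)).mpr (by omega))
      exact this.symm
  · -- (iv)
    intro haodd
    have hoddm : 2 * ((a - 1) / 2) + 1 = a := by
      obtain ⟨c, hc⟩ := haodd; omega
    set m := (a - 1) / 2 with hmdef
    have hma : m ≤ a := by omega
    have hm1a : m + 1 ≤ a := by omega
    have hperpm : perp B (LinearMap.ker (q ^ m)) = LinearMap.ker (q ^ (m + 1)) := by
      have := hperp_eq m hma
      rwa [show a - m = m + 1 by omega] at this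
    refine ⟨?_, ?_, ?_, ?_⟩
    · exact Submodule.map_le_iff_le_comap.mpr fun x hx => hKinv _ x hx
    · exact (hii m hma).mpr (by omega)
    · -- charpoly of induced map = P
      rw [hperpm]
      have hQmem : ∀ x ∈ LinearMap.ker (q ^ (m + 1)),
          (Polynomial.aeval f P) x ∈ LinearMap.ker (q ^ m) := by
        intro x hx
        rw [LinearMap.mem_ker] at hx ⊢
        rw [← hqdef]
        have hps := congrArg (fun (h : Module.End E V) => h x) (pow_succ q m)
        calc (q ^ m) (q x) = ((q ^ m) * q) x := rfl
          _ = (q ^ (m + 1)) x := hps.symm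
          _ = 0 := hx
      have haevalP := aeval_inducedMap_eq_zero f (LinearMap.ker (q ^ m))
        (LinearMap.ker (q ^ (m + 1))) (hKinv (m + 1)) (hKinv m) P hQmem
      have hfr : Module.finrank E
          (↥(LinearMap.ker (q ^ (m + 1))) ⧸
            (Submodule.comap (LinearMap.ker (q ^ (m + 1))).subtype
              (LinearMap.ker (q ^ m)))) = d := by
        have h5 := quot_finrank (LinearMap.ker (q ^ m)) (LinearMap.ker (q ^ (m + 1)))
          (hKmono m (m + 1) (by omega))
        rw [hKdim m hma, hKdim (m + 1) hm1a] at h5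
        have h6 : (m + 1) * d = m * d + d := by ring
        omega
      exact charpoly_of_aeval_irr _ P hPmonic hPirr haevalP (hfr.trans hddef)
    · -- uniqueness in (iv)
      intro W' hW'map hW'iso hW'irr
      obtain ⟨j, hja, hrankW', hW'le⟩ := hsub W' (fun x hx => hW'map ⟨x, hx, rfl⟩)
      have hW'eq : W' = LinearMap.ker (q ^ j) :=
        Submodule.eq_of_le_of_finrank_le hW'le (by rw [hKdim j hja, hrankW'])
      have h2j : 2 * j ≤ a := (hii j hja).mp (hW'eq ▸ hW'iso)
      have hperpj : perp B (LinearMap.ker (q ^ j)) = LinearMap.ker (q ^ (a - j)) :=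
        hperp_eq j hja
      rw [hW'eq, hperpj] at hW'irr
      rw [hW'eq]
      have haevalPa : Polynomial.aeval (inducedMap f (LinearMap.ker (q ^ j))
          (LinearMap.ker (q ^ (a - j)))) (P ^ a) = 0 := by
        apply aeval_inducedMap_eq_zero f _ _ (hKinv (a - j)) (hKinv j) (P ^ a)
        intro x hx
        have h4 : Polynomial.aeval f (P ^ a) = 0 := by rw [map_pow, ← hqdef, hqa]
        rw [h4, LinearMap.zero_apply]
        exact (LinearMap.ker (q ^ j)).zero_mem
      obtain ⟨i, hchari, hranki⟩ := end_charpoly_eq_pow _ P hPmonic hPirr a haevalPa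
      rw [← hddef] at hranki
      have h5 := quot_finrank (LinearMap.ker (q ^ j)) (LinearMap.ker (q ^ (a - j)))
        (hKmono j (a - j) (by omega))
      rw [hKdim j hja, hKdim (a - j) (by omega), hranki] at h5
      have h6 : (i + j) * d = (a - j) * d := by rw [Nat.add_mul]; omega
      have h7 : i + j = a - j := Nat.eq_of_mul_eq_mul_right hd h6
      rw [hchari] at hW'irr
      have hi1 : i = 1 := by
        by_contra hne
        rcases Nat.lt_or_ge i 1 with h | h
        · have hz : i = 0 := by omega
          rw [hz, pow_zero] at hW'irr
          exact not_irreducible_one hW'irr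
        · have hi2 : 2 ≤ i := by omega
          have hfact : P ^ i = P * P ^ (i - 1) := by
            rw [← pow_succ']
            congr 1
            omega
          rcases hW'irr.isUnit_or_isUnit hfact with h | h
          · exact hPirr.not_isUnit h
          · have := (isUnit_pow_iff (show i - 1 ≠ 0 by omega)).mp h
            exact hPirr.not_isUnit this
      have hjm : j = m := by omega
      rw [hjm]
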